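/- (Tightness at the minimum transmit power.) Let A = 2^{2·R_th/B}. If the AP transmit power equals its minimum value p = (A² − A)/Ψ_s + (A − 1)/Ψ_w, then the power allocation P = (A − 1)/Ψ_s satisfies both QoS constraints with equality: R_s(P) = R_th and R_w(P) = R_th. -/

import Mathlib

/-- tightness at the minimum transmit power: with
`p = (A² − A)/Ψ_s + (A − 1)/Ψ_w` and `A = 2^{2·R_th/B}`, the allocation
`P = (A − 1)/Ψ_s` satisfies both QoS constraints with equality. -/
theorem stmt_13 (B Ψs Ψw Rth : ℝ) (hB : 0 < B)
    (hΨs : 0 < Ψs) (hΨw : 0 < Ψw) (hRth : 0 ≤ Rth)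
    (A p P : ℝ)
    (hA : A = (2 : ℝ) ^ (2 * Rth / B))
    (hp : p = (A ^ 2 - A) / Ψs + (A - 1) / Ψw)
    (hP : P = (A - 1) / Ψs) :
    B / 2 * Real.logb 2 (1 + Ψs * P) = Rth ∧
    B / 2 * Real.logb 2 (1 + Ψw * (p - P) / (1 + Ψw * P)) = Rth := by
  have hA1 : (1 : ℝ) ≤ A := by
    rw [hA]
    exact Real.one_le_rpow one_le_two (by positivity)
  have hlog : Real.logb 2 A = 2 * Rth / B := by
    simp [hA, Real.logb_rpow]
  have hfin : B / 2 * (2 * Rth / B) = Rth := by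
    field_simp
  have h1 : 1 + Ψs * P = A := by
    rw [hP]; field_simp; ring
  have hPnn : 0 ≤ P := by
    rw [hP]; exact div_nonneg (by linarith) hΨs.le
  have hd : (1 : ℝ) + Ψw * ((A - 1) / Ψs) ≠ 0 := by
    have : 0 ≤ Ψw * ((A - 1) / Ψs) :=
      mul_nonneg hΨw.le (div_nonneg (by linarith) hΨs.le)
    linarith
  have hdp : (1 : ℝ) + Ψw * P ≠ 0 := by rw [hP]; exact hd
  have hkey : 1 + Ψw * p = A * (1 + Ψw * P) := by
    rw [hp, hP]
    field_simp
    ring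
  have h2 : 1 + Ψw * (p - P) / (1 + Ψw * P) = A := by
    field_simp
    linarith [hkey]
  rw [h1, h2, hlog]
  exact ⟨hfin, hfin⟩
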